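/- arXiv:1705.09475 — 2 statements merged into one kernel-verified Lean document; each statement's English description precedes it below -/
import Mathlib

section
/- Every cycle in the graph F₂,₀ contains at most 5 of its 6 white (simplicial) vertices. -/
open SimpleGraph Walk


variable {V : Type*} {G : SimpleGraph V}

lemma getVert_eq_support_getElem' {u v : V} (p : G.Walk u v) {i : ℕ} (h : i ≤ p.length) :
    p.getVert i = p.support[i]'(by simp [length_support]; omega) := by
  induction p generalizing i with
  | nil => simp only [length_nil, Nat.le_zero] at h; subst h; simp
  | cons ha q ih =>
    cases i with
    | zero => simp
    | succ i =>
      simp only [support_cons, getVert_cons_succ, List.getElem_cons_succ]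
      exact ih (by simpa using h)

lemma cycle_getVert_injOn' {v : V} {c : G.Walk v v} (hc : c.IsCycle)
    {i j : ℕ} (hi1 : 1 ≤ i) (hi : i ≤ c.length) (hj1 : 1 ≤ j) (hj : j ≤ c.length)
    (h : c.getVert i = c.getVert j) : i = j := by
  have hnd := hc.support_nodup
  have hlen : c.support.tail.length = c.length := by simp [length_support]
  have e1 : c.getVert i = c.support.tail[i-1]'(by omega) := by
    rw [getVert_eq_support_getElem' c hi]
    simp only [List.getElem_tail]
    congr 1
    omega
  have e2 : c.getVert j = c.support.tail[j-1]'(by omega) := by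
    rw [getVert_eq_support_getElem' c hj]
    simp only [List.getElem_tail]
    congr 1
    omega
  rw [e1, e2] at h
  have := (List.Nodup.getElem_inj_iff hnd).mp h
  omega

lemma cycle_neighborSet_start' {v : V} {c : G.Walk v v} (hc : c.IsCycle) :
    c.toSubgraph.neighborSet v = {c.getVert 1, c.getVert (c.length - 1)} := by
  have hn := hc.three_le_length
  ext w
  simp only [Subgraph.mem_neighborSet, Set.mem_insert_iff, Set.mem_singleton_iff]
  constructor
  · intro hadj
    rw [toSubgraph_adj_iff] at hadj
    obtain ⟨i, hs, hilt⟩ := hadj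
    rw [Sym2.eq_iff] at hs
    rcases hs with ⟨h1, h2⟩ | ⟨h1, h2⟩
    · rcases Nat.eq_zero_or_pos i with h0 | h0
      · left; subst h0; exact h2.symm
      · exfalso
        have : i = c.length := by
          have := cycle_getVert_injOn' hc (i := i) (j := c.length) h0 (le_of_lt hilt) (by omega)
            le_rfl (by rw [h1, getVert_length])
          omega
        omega
    · right
      have : i + 1 = c.length := by
        have := cycle_getVert_injOn' hc (i := i + 1) (j := c.length) (by omega) (by omega)
          (by omega) le_rfl (by rw [h2, getVert_length])
        omega
      rw [← h1]; congr 1; omega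
  · intro hw
    rcases hw with rfl | rfl
    · have := toSubgraph_adj_getVert c (i := 0) (by omega)
      simpa using this
    · have := toSubgraph_adj_getVert c (i := c.length - 1) (by omega)
      have he : c.length - 1 + 1 = c.length := by omega
      rw [he, getVert_length] at this
      exact this.symm

lemma cycle_ncard_neighborSet' [DecidableEq V] {u : V} {C : G.Walk u u} (hC : C.IsCycle)
    {v : V} (hv : v ∈ C.support) : (C.toSubgraph.neighborSet v).ncard = 2 := by
  have hrot := hC.rotate hv
  have hsub : (C.rotate v hv).toSubgraph = C.toSubgraph := toSubgraph_rotate C hv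
  rw [← hsub, cycle_neighborSet_start' hrot]
  have hn := hrot.three_le_length
  rw [Set.ncard_pair]
  intro h
  have := cycle_getVert_injOn' hrot (i := 1) (j := (C.rotate v hv).length - 1)
    le_rfl (by omega) (by omega) (by omega) h
  omega

set_option maxRecDepth 10000 in
lemma pigeon' : ∀ f : Fin 6 → Fin 3,
    (∀ i j k : Fin 6, f i = f j → f j = f k → i = j ∨ i = k ∨ j = k) →
    ∀ b : Fin 3, ∃ i j : Fin 6, i ≠ j ∧ f i = b ∧ f j = b := by decide


/-- The graph `F₂,₀` on 15 vertices: `0,1,2` are the black triangle vertices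
`b₁,b₂,b₃`; the first copy of the non-outer part of `T` has `g`-vertices
`3,4,5` and white (simplicial) vertices `6,7,8`; the second copy has
`g`-vertices `9,10,11` and white (simplicial) vertices `12,13,14`. -/
def F20 : SimpleGraph (Fin 15) :=
  SimpleGraph.fromRel fun a b =>
    (a, b) ∈ ([(0,1),(0,2),(1,2),
      (3,4),(3,5),(4,5),(3,0),(3,1),(4,1),(4,2),(5,2),(5,0),
      (6,0),(6,1),(6,3),(7,1),(7,2),(7,4),(8,2),(8,0),(8,5),
      (9,10),(9,11),(10,11),(9,0),(9,1),(10,1),(10,2),(11,2),(11,0),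
      (12,0),(12,1),(12,9),(13,1),(13,2),(13,10),(14,2),(14,0),(14,11)] :
        List (Fin 15 × Fin 15))

instance : DecidableRel F20.Adj := fun a b => by
  unfold F20
  rw [SimpleGraph.fromRel_adj]
  infer_instance

def Wv : Fin 6 → Fin 15 := ![6,7,8,12,13,14]
def Bv : Fin 3 → Fin 15 := ![0,1,2]
def Gvv : Fin 6 → Fin 15 := ![3,4,5,9,10,11]

lemma hNbrW' : ∀ (i : Fin 6) (x : Fin 15),
    F20.Adj (Wv i) x → (∃ b : Fin 3, x = Bv b) ∨ x = Gvv i := by decide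

lemma hWinj' : ∀ i j : Fin 6, Wv i = Wv j → i = j := by decide

/-- Every cycle in the graph `F₂,₀` contains at most 5 of its 6 white
(simplicial) vertices `6,7,8,12,13,14`. -/
theorem F20_cycle_at_most_five_white_vertices
    (u : Fin 15) (C : F20.Walk u u) (hC : C.IsCycle) :
    {v | v ∈ C.support ∧ v ∈ ({6, 7, 8, 12, 13, 14} : Set (Fin 15))}.ncard ≤ 5 := by
  by_cases hall : ∀ w ∈ ({6, 7, 8, 12, 13, 14} : Set (Fin 15)), w ∈ C.support
  · exfalso
    set H := C.toSubgraph with hH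
    have hsupp : ∀ {a b : Fin 15}, H.Adj a b → a ∈ C.support := by
      intro a b hab
      exact (C.mem_verts_toSubgraph).mp hab.fst_mem
    have hpair : ∀ {v : Fin 15}, v ∈ C.support →
        ∃ a b, a ≠ b ∧ H.neighborSet v = {a, b} := by
      intro v hv
      exact Set.ncard_eq_two.mp (cycle_ncard_neighborSet' hC hv)
    have hno3 : ∀ {v x y z : Fin 15}, H.Adj v x → H.Adj v y → H.Adj v z →
        x = y ∨ x = z ∨ y = z := by
      intro v x y z hx hy hz
      obtain ⟨a, b, hab, hset⟩ := hpair (hsupp hx)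
      have hm : ∀ w, H.Adj v w → w = a ∨ w = b := by
        intro w hw
        have : w ∈ H.neighborSet v := hw
        rw [hset] at this
        simpa using this
      rcases hm x hx with rfl | rfl <;> rcases hm y hy with rfl | rfl <;>
        rcases hm z hz with rfl | rfl <;> simp
    have hF : ∀ {a b : Fin 15}, H.Adj a b → F20.Adj a b := fun h => H.adj_sub h
    have hexact : ∀ (v x : Fin 15), H.Adj v x →
        ∃ y, H.Adj v y ∧ y ≠ x ∧ ∀ z, H.Adj v z → z = x ∨ z = y := by
      intro v x hvx
      obtain ⟨a, b, hab, hset⟩ := hpair (hsupp hvx)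
      have hm : ∀ w, H.Adj v w ↔ (w = a ∨ w = b) := by
        intro w
        rw [show H.Adj v w ↔ w ∈ H.neighborSet v from Iff.rfl, hset]
        simp
      rcases (hm x).mp hvx with rfl | rfl
      · exact ⟨b, (hm b).mpr (Or.inr rfl), hab.symm, fun z hz => (hm z).mp hz⟩
      · exact ⟨a, (hm a).mpr (Or.inl rfl), hab, fun z hz => ((hm z).mp hz).symm⟩
    have hWsupp : ∀ i : Fin 6, Wv i ∈ C.support := by
      intro i
      apply hall
      fin_cases i <;> simp only [Wv, Set.mem_insert_iff, Set.mem_singleton_iff] <;> decide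
    -- each white has a black H-neighbour
    have hWnbr : ∀ i : Fin 6, ∃ b : Fin 3, H.Adj (Wv i) (Bv b) := by
      intro i
      obtain ⟨a, b, hab, hset⟩ := hpair (hWsupp i)
      have ha : H.Adj (Wv i) a := by
        have : a ∈ H.neighborSet (Wv i) := by rw [hset]; simp
        exact this
      have hb : H.Adj (Wv i) b := by
        have : b ∈ H.neighborSet (Wv i) := by rw [hset]; simp
        exact this
      rcases hNbrW' i a (hF ha) with ⟨ba, rfl⟩ | rfl
      · exact ⟨ba, ha⟩
      · rcases hNbrW' i b (hF hb) with ⟨bb, rfl⟩ | rfl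
        · exact ⟨bb, hb⟩
        · exact absurd rfl hab
    choose c hc using hWnbr
    have hfib : ∀ i j k : Fin 6, c i = c j → c j = c k → i = j ∨ i = k ∨ j = k := by
      intro i j k hij hjk
      have h1 : H.Adj (Bv (c i)) (Wv i) := (hc i).symm
      have h2 : H.Adj (Bv (c i)) (Wv j) := by rw [hij]; exact (hc j).symm
      have h3 : H.Adj (Bv (c i)) (Wv k) := by rw [hij, hjk]; exact (hc k).symm
      rcases hno3 h1 h2 h3 with h | h | h
      · exact Or.inl (hWinj' _ _ h)
      · exact Or.inr (Or.inl (hWinj' _ _ h))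
      · exact Or.inr (Or.inr (hWinj' _ _ h))
    have hBfull : ∀ b : Fin 3, ∃ i j : Fin 6, i ≠ j ∧ c i = b ∧ c j = b ∧
        ∀ x, H.Adj (Bv b) x → x = Wv i ∨ x = Wv j := by
      intro b
      obtain ⟨i, j, hij, hbi, hbj⟩ := pigeon' c hfib b
      have h1 : H.Adj (Bv b) (Wv i) := by rw [← hbi]; exact (hc i).symm
      have h2 : H.Adj (Bv b) (Wv j) := by rw [← hbj]; exact (hc j).symm
      refine ⟨i, j, hij, hbi, hbj, fun x hx => ?_⟩
      rcases hno3 hx h1 h2 with h | h | h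
      · exact Or.inl h
      · exact Or.inr h
      · exact absurd (hWinj' _ _ h) hij
    have hBwhite : ∀ (b : Fin 3) (x : Fin 15), H.Adj (Bv b) x → ∃ i : Fin 6, x = Wv i := by
      intro b x hx
      obtain ⟨i, j, _, _, _, hall'⟩ := hBfull b
      rcases hall' x hx with rfl | rfl
      · exact ⟨i, rfl⟩
      · exact ⟨j, rfl⟩
    have hOneBlack : ∀ (i : Fin 6) (b b' : Fin 3),
        H.Adj (Wv i) (Bv b) → H.Adj (Wv i) (Bv b') → b = b' := by
      intro i b b' h1 h2
      obtain ⟨i1, j1, _, hci1, hcj1, hall1⟩ := hBfull b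
      obtain ⟨i2, j2, _, hci2, hcj2, hall2⟩ := hBfull b'
      have e1 : c i = b := by
        rcases hall1 (Wv i) h1.symm with h | h
        · rw [hWinj' _ _ h]; exact hci1
        · rw [hWinj' _ _ h]; exact hcj1
      have e2 : c i = b' := by
        rcases hall2 (Wv i) h2.symm with h | h
        · rw [hWinj' _ _ h]; exact hci2
        · rw [hWinj' _ _ h]; exact hcj2
      rw [← e1, ← e2]
    -- each white is H-adjacent to its g-vertex
    have hWg : ∀ i : Fin 6, H.Adj (Wv i) (Gvv i) := by
      intro i
      obtain ⟨a, b, hab, hset⟩ := hpair (hWsupp i)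
      have ha : H.Adj (Wv i) a := by
        have : a ∈ H.neighborSet (Wv i) := by rw [hset]; simp
        exact this
      have hb : H.Adj (Wv i) b := by
        have : b ∈ H.neighborSet (Wv i) := by rw [hset]; simp
        exact this
      rcases hNbrW' i a (hF ha) with ⟨ba, rfl⟩ | rfl
      · rcases hNbrW' i b (hF hb) with ⟨bb, rfl⟩ | rfl
        · exact absurd (congrArg Bv (hOneBlack i ba bb ha hb)) hab
        · exact hb
      · exact ha
    have h36 : H.Adj 3 6 := (hWg 0).symm
    have h47 : H.Adj 4 7 := (hWg 1).symm
    have h58 : H.Adj 5 8 := (hWg 2).symm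
    have hnotW : ∀ (b : Fin 3) (x : Fin 15), H.Adj (Bv b) x →
        x ≠ 3 ∧ x ≠ 4 ∧ x ≠ 5 := by
      intro b x hx
      obtain ⟨i, rfl⟩ := hBwhite b x hx
      fin_cases i <;> exact ⟨by decide, by decide, by decide⟩
    have hT3 : ∀ x, H.Adj 3 x → x = 4 ∨ x = 5 ∨ x = 6 := by
      intro x hx
      have hfx := hF hx
      have : x = 0 ∨ x = 1 ∨ x = 4 ∨ x = 5 ∨ x = 6 :=
        (by decide : ∀ y : Fin 15, F20.Adj 3 y → y = 0 ∨ y = 1 ∨ y = 4 ∨ y = 5 ∨ y = 6) x hfx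
      rcases this with rfl | rfl | h | h | h
      · exact absurd (hnotW 0 3 hx.symm).1 (by simp)
      · exact absurd (hnotW 1 3 hx.symm).1 (by simp)
      · exact Or.inl h
      · exact Or.inr (Or.inl h)
      · exact Or.inr (Or.inr h)
    have hT4 : ∀ x, H.Adj 4 x → x = 3 ∨ x = 5 ∨ x = 7 := by
      intro x hx
      have hfx := hF hx
      have : x = 1 ∨ x = 2 ∨ x = 3 ∨ x = 5 ∨ x = 7 :=
        (by decide : ∀ y : Fin 15, F20.Adj 4 y → y = 1 ∨ y = 2 ∨ y = 3 ∨ y = 5 ∨ y = 7) x hfx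
      rcases this with rfl | rfl | h | h | h
      · exact absurd (hnotW 1 4 hx.symm).2.1 (by simp)
      · exact absurd (hnotW 2 4 hx.symm).2.1 (by simp)
      · exact Or.inl h
      · exact Or.inr (Or.inl h)
      · exact Or.inr (Or.inr h)
    have hT5 : ∀ x, H.Adj 5 x → x = 3 ∨ x = 4 ∨ x = 8 := by
      intro x hx
      have hfx := hF hx
      have : x = 0 ∨ x = 2 ∨ x = 3 ∨ x = 4 ∨ x = 8 :=
        (by decide : ∀ y : Fin 15, F20.Adj 5 y → y = 0 ∨ y = 2 ∨ y = 3 ∨ y = 4 ∨ y = 8) x hfx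
      rcases this with rfl | rfl | h | h | h
      · exact absurd (hnotW 0 5 hx.symm).2.2 (by simp)
      · exact absurd (hnotW 2 5 hx.symm).2.2 (by simp)
      · exact Or.inl h
      · exact Or.inr (Or.inl h)
      · exact Or.inr (Or.inr h)
    -- exactly-one-of triangle edges at each of 3, 4, 5
    have hch3 : (H.Adj 3 4 ∧ ¬ H.Adj 3 5) ∨ (H.Adj 3 5 ∧ ¬ H.Adj 3 4) := by
      obtain ⟨y, hy, hy6, hally⟩ := hexact 3 6 h36
      rcases hT3 y hy with rfl | rfl | rfl
      · refine Or.inl ⟨hy, fun h5 => ?_⟩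
        rcases hally 5 h5 with h | h <;> exact absurd h (by decide)
      · refine Or.inr ⟨hy, fun h4 => ?_⟩
        rcases hally 4 h4 with h | h <;> exact absurd h (by decide)
      · exact absurd rfl hy6
    have hch4 : (H.Adj 4 3 ∧ ¬ H.Adj 4 5) ∨ (H.Adj 4 5 ∧ ¬ H.Adj 4 3) := by
      obtain ⟨y, hy, hy7, hally⟩ := hexact 4 7 h47
      rcases hT4 y hy with rfl | rfl | rfl
      · refine Or.inl ⟨hy, fun h5 => ?_⟩
        rcases hally 5 h5 with h | h <;> exact absurd h (by decide)
      · refine Or.inr ⟨hy, fun h3 => ?_⟩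
        rcases hally 3 h3 with h | h <;> exact absurd h (by decide)
      · exact absurd rfl hy7
    have hch5 : (H.Adj 5 3 ∧ ¬ H.Adj 5 4) ∨ (H.Adj 5 4 ∧ ¬ H.Adj 5 3) := by
      obtain ⟨y, hy, hy8, hally⟩ := hexact 5 8 h58
      rcases hT5 y hy with rfl | rfl | rfl
      · refine Or.inl ⟨hy, fun h4 => ?_⟩
        rcases hally 4 h4 with h | h <;> exact absurd h (by decide)
      · refine Or.inr ⟨hy, fun h3 => ?_⟩
        rcases hally 3 h3 with h | h <;> exact absurd h (by decide)
      · exact absurd rfl hy8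
    rcases hch3 with ⟨h1, h1'⟩ | ⟨h1, h1'⟩ <;> rcases hch4 with ⟨h2, h2'⟩ | ⟨h2, h2'⟩ <;>
      rcases hch5 with ⟨h3, h3'⟩ | ⟨h3, h3'⟩ <;>
      first
        | exact h1' h2.symm
        | exact h1' h3.symm
        | exact h2' h1.symm
        | exact h2' h3.symm
        | exact h3' h1.symm
        | exact h3' h2.symm
  · push_neg at hall
    obtain ⟨w, hwW, hwns⟩ := hall
    have hss : {v | v ∈ C.support ∧ v ∈ ({6, 7, 8, 12, 13, 14} : Set (Fin 15))} ⊂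
        ({6, 7, 8, 12, 13, 14} : Set (Fin 15)) := by
      constructor
      · intro x hx; exact hx.2
      · intro hsub
        exact hwns (hsub hwW).1
    have hlt := Set.ncard_lt_ncard hss (Set.toFinite _)
    have h6 : ({6, 7, 8, 12, 13, 14} : Set (Fin 15)).ncard = 6 := by
      rw [show ({6, 7, 8, 12, 13, 14} : Set (Fin 15)) =
        ↑({6, 7, 8, 12, 13, 14} : Finset (Fin 15)) by simp, Set.ncard_coe_finset]
      decide
    omega
end

section
/- The graph F₂,₀ contains a cycle with exactly 14 vertices, and every cycle in F₂,₀ has at most 14 vertices; that is, a longest cycle of F₂,₀ has 14 vertices (in particular, F₂,₀ is not Hamiltonian). -/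
instance inst_s9 : DecidableRel F20.Adj := fun a b =>
  decidable_of_iff' _ (SimpleGraph.fromRel_adj _ a b)

open Finset in
lemma countP_eq (x : Fin 15) (l : List (Sym2 (Fin 15))) (hl : ∀ e ∈ l, e ∈ F20.edgeSet) :
    (l.countP fun e => x ∈ e) = ∑ u ∈ F20.neighborFinset x, l.count s(x, u) := by
  induction l with
  | nil => simp
  | cons e t ih =>
    have he : e ∈ F20.edgeSet := hl e List.mem_cons_self
    have ht : ∀ e ∈ t, e ∈ F20.edgeSet := fun e h => hl e (List.mem_cons_of_mem _ h)
    rw [List.countP_cons]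
    simp only [List.count_cons, beq_iff_eq, decide_eq_true_eq]
    rw [Finset.sum_add_distrib, ← ih ht]
    congr 1
    induction e using Sym2.ind with
    | _ a b =>
      have hadj : F20.Adj a b := he
      by_cases hx : x ∈ s(a, b)
      · rcases Sym2.mem_iff.mp hx with h1 | h1
        · subst h1
          have h' : ∀ u : Fin 15, (if s(x, b) = s(x, u) then 1 else 0) = (if b = u then (1:ℕ) else 0) := by
            intro u; simp [Sym2.eq_iff, hadj.ne, Ne.symm hadj.ne]
          simp only [h']
          rw [Finset.sum_ite_eq (F20.neighborFinset x) b fun _ => 1]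
          simp [SimpleGraph.mem_neighborFinset, hadj, hx]
        · subst h1
          have h' : ∀ u : Fin 15, (if s(a, x) = s(x, u) then 1 else 0) = (if a = u then (1:ℕ) else 0) := by
            intro u; simp [Sym2.eq_iff, hadj.ne, Ne.symm hadj.ne]
          simp only [h']
          rw [Finset.sum_ite_eq (F20.neighborFinset x) a fun _ => 1]
          simp [SimpleGraph.mem_neighborFinset, hadj.symm, hx]
      · rw [Finset.sum_eq_zero, if_neg hx]
        intro u _
        rw [if_neg]
        intro h
        exact hx (by rw [h]; exact Sym2.mem_mk_left x u)

open Finset in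
lemma sum_countP (l : List (Sym2 (Fin 15))) (hl : ∀ e ∈ l, e ∈ F20.edgeSet) :
    (∑ x : Fin 15, l.countP fun e => x ∈ e) = 2 * l.length := by
  induction l with
  | nil => simp
  | cons e t ih =>
    have he : e ∈ F20.edgeSet := hl e List.mem_cons_self
    have ht : ∀ e ∈ t, e ∈ F20.edgeSet := fun e h => hl e (List.mem_cons_of_mem _ h)
    simp only [List.countP_cons, decide_eq_true_eq]
    rw [Finset.sum_add_distrib, ih ht]
    induction e using Sym2.ind with
    | _ a b =>
      have hadj : F20.Adj a b := he
      have hne : a ≠ b := hadj.ne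
      have : ∀ x : Fin 15, (if x ∈ s(a, b) then 1 else 0) =
          ((if x = a then 1 else 0) + (if x = b then 1 else 0)) := by
        intro x
        by_cases h1 : x = a <;> by_cases h2 : x = b <;>
          simp_all [Sym2.mem_iff]
      simp only [this]
      rw [Finset.sum_add_distrib, Finset.sum_ite_eq' Finset.univ a fun _ => 1,
        Finset.sum_ite_eq' Finset.univ b fun _ => 1]
      simp only [Finset.mem_univ, if_true, List.length_cons]
      omega

lemma eq_two_of (f : Fin 15 → ℕ) (h2 : ∀ x, 2 ≤ f x) (hs : ∑ x : Fin 15, f x = 30)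
    (a : Fin 15) : f a = 2 := by
  by_contra h
  have h3 : 3 ≤ f a := by have := h2 a; omega
  have hle : ∀ x ∈ Finset.univ, (if x = a then 3 else 2) ≤ f x := by
    intro x _
    split_ifs with h'
    · exact h' ▸ h3
    · exact h2 x
  have hsum : (∑ x : Fin 15, if x = a then 3 else 2) ≤ 30 := hs ▸ Finset.sum_le_sum hle
  have : ∀ x : Fin 15, (if x = a then 3 else 2) = 2 + (if x = a then 1 else 0) := by
    intro x; split_ifs <;> rfl
  simp only [this] at hsum
  rw [Finset.sum_add_distrib, Finset.sum_const, Finset.sum_ite_eq' Finset.univ a fun _ => 1] at hsum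
  simp at hsum

lemma exists_edge {u v : Fin 15} (x : Fin 15) (p : F20.Walk u v) (hnil : ¬p.Nil)
    (hx : x ∈ p.support) : ∃ e ∈ p.edges, x ∈ e := by
  induction p with
  | nil => simp at hnil
  | @cons a b c h q ih =>
    rw [SimpleGraph.Walk.support_cons, List.mem_cons] at hx
    rcases hx with rfl | hx
    · exact ⟨s(x, b), by simp, Sym2.mem_mk_left _ _⟩
    · cases q with
      | nil =>
        simp only [SimpleGraph.Walk.support_nil, List.mem_singleton] at hx
        subst hx
        exact ⟨s(a, x), by simp, Sym2.mem_mk_right _ _⟩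
      | cons h' q' =>
        obtain ⟨e, he, hxe⟩ := ih (by simp) hx
        exact ⟨e, List.mem_cons_of_mem _ he, hxe⟩

lemma whiteW (a b c : ℕ) (h : a + (b + c) = 2) (hc : c ≤ 1) : 1 ≤ a + b := by omega

lemma bStep {x0_1 x0_11 x0_12 x0_14 x0_2 x0_3 x0_5 x0_6 x0_8 x0_9 x1_10 x1_12 x1_13 x1_2 x1_3 x1_4 x1_6 x1_7 x1_9 x2_10 x2_11 x2_13 x2_14 x2_4 x2_5 x2_7 x2_8 : ℕ}
    (hb01 : x0_1 ≤ 1) (hb02 : x0_2 ≤ 1) (hb12 : x1_2 ≤ 1) (w6 : 1 ≤ x0_6 + x1_6) (w7 : 1 ≤ x1_7 + x2_7) (w8 : 1 ≤ x0_8 + x2_8) (w12 : 1 ≤ x0_12 + x1_12) (w13 : 1 ≤ x1_13 + x2_13) (w14 : 1 ≤ x0_14 + x2_14) (hv0 : x0_1 + (x0_2 + (x0_3 + (x0_5 + (x0_6 + (x0_8 + (x0_9 + (x0_11 + (x0_12 + (x0_14))))))))) = 2) (hv1 : x0_1 + (x1_2 + (x1_3 + (x1_4 + (x1_6 + (x1_7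 + (x1_9 + (x1_10 + (x1_12 + (x1_13))))))))) = 2) (hv2 : x0_2 + (x1_2 + (x2_4 + (x2_5 + (x2_7 + (x2_8 + (x2_10 + (x2_11 + (x2_13 + (x2_14))))))))) = 2) :
    x0_3 = 0 ∧ x1_3 = 0 ∧ x1_4 = 0 ∧ x2_4 = 0 ∧ x0_5 = 0 ∧ x2_5 = 0 ∧ x0_9 = 0 ∧ x1_9 = 0 ∧ x1_10 = 0 ∧ x2_10 = 0 ∧ x0_11 = 0 ∧ x2_11 = 0 ∧ x0_6 + x1_6 = 1 ∧ x1_7 + x2_7 = 1 ∧ x0_8 + x2_8 = 1 ∧ x0_12 + x1_12 = 1 ∧ x1_13 + x2_13 = 1 ∧ x0_14 + x2_14 = 1 := by omega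

lemma copyStep (x03 x13 x34 x35 x36 x14 x24 x45 x47 x05 x25 x58 x06 x16 x17 x27 x08 x28 : ℕ)
    (hz03 : x03 = 0) (hz13 : x13 = 0) (hz14 : x14 = 0) (hz24 : x24 = 0) (hz05 : x05 = 0) (hz25 : x25 = 0)
    (hs6 : x06 + x16 = 1) (hs7 : x17 + x27 = 1) (hs8 : x08 + x28 = 1)
    (hv3 : x03 + (x13 + (x34 + (x35 + x36))) = 2)
    (hv4 : x14 + (x24 + (x34 + (x45 + x47))) = 2)
    (hv5 : x05 + (x25 + (x35 + (x45 + x58))) = 2)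
    (hv6 : x06 + (x16 + x36) = 2)
    (hv7 : x17 + (x27 + x47) = 2)
    (hv8 : x08 + (x28 + x58) = 2) : False := by omega

lemma keyFalse {x0_1 x0_11 x0_12 x0_14 x0_2 x0_3 x0_5 x0_6 x0_8 x0_9 x10_11 x10_13 x11_14 x1_10 x1_12 x1_13 x1_2 x1_3 x1_4 x1_6 x1_7 x1_9 x2_10 x2_11 x2_13 x2_14 x2_4 x2_5 x2_7 x2_8 x3_4 x3_5 x3_6 x4_5 x4_7 x5_8 x9_10 x9_11 x9_12 : ℕ}
    (hbx0_1 : x0_1 ≤ 1) (hbx0_2 : x0_2 ≤ 1) (hbx0_3 : x0_3 ≤ 1) (hbx0_5 : x0_5 ≤ 1) (hbx0_6 : x0_6 ≤ 1) (hbx0_8 : x0_8 ≤ 1) (hbx0_9 : x0_9 ≤ 1) (hbx0_11 : x0_11 ≤ 1) (hbx0_12 : x0_12 ≤ 1) (hbx0_14 : x0_14 ≤ 1) (hbx1_2 : x1_2 ≤ 1) (hbx1_3 : x1_3 ≤ 1) (hbx1_4 : x1_4 ≤ 1) (hbx1_6 : x1_6 ≤ 1) (hbx1_7 : x1_7 ≤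 1) (hbx1_9 : x1_9 ≤ 1) (hbx1_10 : x1_10 ≤ 1) (hbx1_12 : x1_12 ≤ 1) (hbx1_13 : x1_13 ≤ 1) (hbx2_4 : x2_4 ≤ 1) (hbx2_5 : x2_5 ≤ 1) (hbx2_7 : x2_7 ≤ 1) (hbx2_8 : x2_8 ≤ 1) (hbx2_10 : x2_10 ≤ 1) (hbx2_11 : x2_11 ≤ 1) (hbx2_13 : x2_13 ≤ 1) (hbx2_14 : x2_14 ≤ 1) (hbx3_4 : x3_4 ≤ 1) (hbx3_5 : x3_5 ≤ 1) (hbx3_6 : x3_6 ≤ 1) (hbx4_5 : x4_5 ≤ 1) (hbx4_7 : x4_7 ≤ 1) (hbx5_8 : x5_8 ≤ 1) (hbx9_10 : x9_10 ≤ 1) (hbx9_11 : x9_11 ≤ 1) (hbx9_12 : x9_12 ≤ 1) (hbx10_11 : x10_11 ≤ 1) (hbx10_13 : x10_13 ≤ 1) (hbx11_14 : x11_14 ≤ 1) (hv0 : x0_1 + (x0_2 + (x0_3 + (x0_5 + (x0_6 + (x0_8 + (x0_9 + (x0_11 + (x0_12 + (x0_14))))))))) = 2) (hv1 : x0_1 +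 (x1_2 + (x1_3 + (x1_4 + (x1_6 + (x1_7 + (x1_9 + (x1_10 + (x1_12 + (x1_13))))))))) = 2) (hv2 : x0_2 + (x1_2 + (x2_4 + (x2_5 + (x2_7 + (x2_8 + (x2_10 + (x2_11 + (x2_13 + (x2_14))))))))) = 2) (hv3 : x0_3 + (x1_3 + (x3_4 + (x3_5 + (x3_6)))) = 2) (hv4 : x1_4 + (x2_4 + (x3_4 + (x4_5 + (x4_7)))) = 2) (hv5 : x0_5 + (x2_5 + (x3_5 + (x4_5 + (x5_8)))) = 2) (hv6 : x0_6 + (x1_6 + (x3_6)) = 2) (hv7 : x1_7 + (x2_7 + (x4_7)) = 2) (hv8 : x0_8 + (x2_8 + (x5_8)) = 2) (hv9 : x0_9 + (x1_9 + (x9_10 + (x9_11 + (x9_12)))) = 2) (hv10 : x1_10 + (x2_10 + (x9_10 + (x10_11 + (x10_13)))) = 2) (hv11 : x0_11 + (x2_11 + (x9_11 + (x10_11 + (x11_14)))) = 2) (hv12 : x0_12 + (x1_12 + (x9_12)) = 2) (hv13 : x1_13 + (x2_13 + (x10_13)) = 2) (hv14 : x0_14 + (x2_14 + (x11_14)) =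 2) : False := by
  have w6 := whiteW _ _ _ hv6 hbx3_6
  have w7 := whiteW _ _ _ hv7 hbx4_7
  have w8 := whiteW _ _ _ hv8 hbx5_8
  have w12 := whiteW _ _ _ hv12 hbx9_12
  have w13 := whiteW _ _ _ hv13 hbx10_13
  have w14 := whiteW _ _ _ hv14 hbx11_14
  obtain ⟨z0_3, z1_3, z1_4, z2_4, z0_5, z2_5, z0_9, z1_9, z1_10, z2_10, z0_11, z2_11, s6, s7, s8, s12, s13, s14⟩ :=
    bStep hbx0_1 hbx0_2 hbx1_2 w6 w7 w8 w12 w13 w14 hv0 hv1 hv2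
  exact copyStep _ _ _ _ _ _ _ _ _ _ _ _ _ _ _ _ _ _ z0_3 z1_3 z1_4 z2_4 z0_5 z2_5 s6 s7 s8 hv3 hv4 hv5 hv6 hv7 hv8


def c14 : F20.Walk 0 0 :=
  SimpleGraph.Walk.cons (show F20.Adj 0 6 by decide) <|
  SimpleGraph.Walk.cons (show F20.Adj 6 3 by decide) <|
  SimpleGraph.Walk.cons (show F20.Adj 3 5 by decide) <|
  SimpleGraph.Walk.cons (show F20.Adj 5 8 by decide) <|
  SimpleGraph.Walk.cons (show F20.Adj 8 2 by decide) <|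
  SimpleGraph.Walk.cons (show F20.Adj 2 7 by decide) <|
  SimpleGraph.Walk.cons (show F20.Adj 7 4 by decide) <|
  SimpleGraph.Walk.cons (show F20.Adj 4 1 by decide) <|
  SimpleGraph.Walk.cons (show F20.Adj 1 13 by decide) <|
  SimpleGraph.Walk.cons (show F20.Adj 13 10 by decide) <|
  SimpleGraph.Walk.cons (show F20.Adj 10 11 by decide) <|
  SimpleGraph.Walk.cons (show F20.Adj 11 9 by decide) <|
  SimpleGraph.Walk.cons (show F20.Adj 9 12 by decide) <|
  SimpleGraph.Walk.cons (show F20.Adj 12 0 by decide) <|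
  SimpleGraph.Walk.nil

/-- A longest cycle of `F₂,₀` has exactly 14 vertices: there is a cycle with
14 vertices (a cycle has as many vertices as edges, i.e. its length), and
every cycle has at most 14 vertices. In particular `F₂,₀` is not Hamiltonian. -/
theorem F20_longest_cycle_has_fourteen_vertices :
    (∃ (u : Fin 15) (C : F20.Walk u u), C.IsCycle ∧ C.length = 14) ∧
    (∀ (u : Fin 15) (C : F20.Walk u u), C.IsCycle → C.length ≤ 14) := by
  constructor
  · refine ⟨0, c14, ?_, by decide⟩
    rw [SimpleGraph.Walk.isCycle_def, SimpleGraph.Walk.isTrail_def]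
    exact ⟨by decide, by simp [c14], by decide⟩
  · intro u C hC
    by_contra hlen
    push_neg at hlen
    obtain ⟨htrail, hne, hnd⟩ := (SimpleGraph.Walk.isCycle_def C).mp hC
    have hlt : C.support.tail.length = C.length := by
      rw [List.length_tail, SimpleGraph.Walk.length_support]
      simp
    have h15 : C.length ≤ 15 := by
      have := List.Nodup.length_le_card hnd
      rw [hlt] at this
      simpa using this
    have hlen15 : C.length = 15 := by omega
    have hall : ∀ x : Fin 15, x ∈ C.support := by
      intro x
      have hcard : C.support.tail.toFinset = Finset.univ := by
        apply Finset.eq_univ_of_card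
        rw [List.toFinset_card_of_nodup hnd, hlt, hlen15]
        rfl
      exact List.mem_of_mem_tail (by rw [← List.mem_toFinset, hcard]; exact Finset.mem_univ x)
    have hedge : ∀ e ∈ C.edges, e ∈ F20.edgeSet := fun e he => C.edges_subset_edgeSet he
    have hcnt : ∀ e : Sym2 (Fin 15), C.edges.count e ≤ 1 := fun e =>
      List.nodup_iff_count_le_one.mp htrail.edges_nodup e
    have h2 : ∀ a : Fin 15, (C.edges.countP fun e => a ∈ e) = 2 := by
      intro a
      refine eq_two_of (fun y => C.edges.countP fun e => y ∈ e) (fun x => ?_) ?_ a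
      · obtain ⟨k, hk⟩ := (htrail.even_countP_edges_iff x).mpr (fun h => absurd rfl h)
        have hp : 0 < (C.edges.countP fun e => x ∈ e) := by
          rw [List.countP_pos_iff]
          obtain ⟨e, he, hxe⟩ := exists_edge x C hC.not_nil (hall x)
          exact ⟨e, he, by simpa using hxe⟩
        show 2 ≤ (C.edges.countP fun e => x ∈ e)
        omega
      · rw [sum_countP C.edges hedge, SimpleGraph.Walk.length_edges, hlen15]
    have hnb0 : F20.neighborFinset 0 = ({1,2,3,5,6,8,9,11,12,14} : Finset (Fin 15)) := by decide
    have hv0 := (countP_eq 0 C.edges hedge).symm.trans (h2 0)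
    rw [hnb0, Finset.sum_insert (by decide), Finset.sum_insert (by decide), Finset.sum_insert (by decide), Finset.sum_insert (by decide), Finset.sum_insert (by decide), Finset.sum_insert (by decide), Finset.sum_insert (by decide), Finset.sum_insert (by decide), Finset.sum_insert (by decide), Finset.sum_singleton] at hv0
    have hnb1 : F20.neighborFinset 1 = ({0,2,3,4,6,7,9,10,12,13} : Finset (Fin 15)) := by decide
    have hv1 := (countP_eq 1 C.edges hedge).symm.trans (h2 1)
    rw [hnb1, Finset.sum_insert (by decide), Finset.sum_insert (by decide), Finset.sum_insert (by decide), Finset.sum_insert (by decide), Finset.sum_insert (by decide), Finset.sum_insert (by decide), Finset.sum_insert (by decide), Finset.sum_insert (by decide), Finset.sum_insert (by decide), Finset.sum_singleton] at hv1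
    rw [(Sym2.eq_swap : s((1:Fin 15), 0) = s(0, 1))] at hv1
    have hnb2 : F20.neighborFinset 2 = ({0,1,4,5,7,8,10,11,13,14} : Finset (Fin 15)) := by decide
    have hv2 := (countP_eq 2 C.edges hedge).symm.trans (h2 2)
    rw [hnb2, Finset.sum_insert (by decide), Finset.sum_insert (by decide), Finset.sum_insert (by decide), Finset.sum_insert (by decide), Finset.sum_insert (by decide), Finset.sum_insert (by decide), Finset.sum_insert (by decide), Finset.sum_insert (by decide), Finset.sum_insert (by decide), Finset.sum_singleton] at hv2
    rw [(Sym2.eq_swap : s((2:Fin 15), 0) = s(0, 2)), (Sym2.eq_swap : s((2:Fin 15), 1) = s(1, 2))] at hv2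
    have hnb3 : F20.neighborFinset 3 = ({0,1,4,5,6} : Finset (Fin 15)) := by decide
    have hv3 := (countP_eq 3 C.edges hedge).symm.trans (h2 3)
    rw [hnb3, Finset.sum_insert (by decide), Finset.sum_insert (by decide), Finset.sum_insert (by decide), Finset.sum_insert (by decide), Finset.sum_singleton] at hv3
    rw [(Sym2.eq_swap : s((3:Fin 15), 0) = s(0, 3)), (Sym2.eq_swap : s((3:Fin 15), 1) = s(1, 3))] at hv3
    have hnb4 : F20.neighborFinset 4 = ({1,2,3,5,7} : Finset (Fin 15)) := by decide
    have hv4 := (countP_eq 4 C.edges hedge).symm.trans (h2 4)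
    rw [hnb4, Finset.sum_insert (by decide), Finset.sum_insert (by decide), Finset.sum_insert (by decide), Finset.sum_insert (by decide), Finset.sum_singleton] at hv4
    rw [(Sym2.eq_swap : s((4:Fin 15), 1) = s(1, 4)), (Sym2.eq_swap : s((4:Fin 15), 2) = s(2, 4)), (Sym2.eq_swap : s((4:Fin 15), 3) = s(3, 4))] at hv4
    have hnb5 : F20.neighborFinset 5 = ({0,2,3,4,8} : Finset (Fin 15)) := by decide
    have hv5 := (countP_eq 5 C.edges hedge).symm.trans (h2 5)
    rw [hnb5, Finset.sum_insert (by decide), Finset.sum_insert (by decide), Finset.sum_insert (by decide), Finset.sum_insert (by decide), Finset.sum_singleton] at hv5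
    rw [(Sym2.eq_swap : s((5:Fin 15), 0) = s(0, 5)), (Sym2.eq_swap : s((5:Fin 15), 2) = s(2, 5)), (Sym2.eq_swap : s((5:Fin 15), 3) = s(3, 5)), (Sym2.eq_swap : s((5:Fin 15), 4) = s(4, 5))] at hv5
    have hnb6 : F20.neighborFinset 6 = ({0,1,3} : Finset (Fin 15)) := by decide
    have hv6 := (countP_eq 6 C.edges hedge).symm.trans (h2 6)
    rw [hnb6, Finset.sum_insert (by decide), Finset.sum_insert (by decide), Finset.sum_singleton] at hv6
    rw [(Sym2.eq_swap : s((6:Fin 15), 0) = s(0, 6)), (Sym2.eq_swap : s((6:Fin 15), 1) = s(1, 6)), (Sym2.eq_swap : s((6:Fin 15), 3) = s(3, 6))] at hv6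
    have hnb7 : F20.neighborFinset 7 = ({1,2,4} : Finset (Fin 15)) := by decide
    have hv7 := (countP_eq 7 C.edges hedge).symm.trans (h2 7)
    rw [hnb7, Finset.sum_insert (by decide), Finset.sum_insert (by decide), Finset.sum_singleton] at hv7
    rw [(Sym2.eq_swap : s((7:Fin 15), 1) = s(1, 7)), (Sym2.eq_swap : s((7:Fin 15), 2) = s(2, 7)), (Sym2.eq_swap : s((7:Fin 15), 4) = s(4, 7))] at hv7
    have hnb8 : F20.neighborFinset 8 = ({0,2,5} : Finset (Fin 15)) := by decide
    have hv8 := (countP_eq 8 C.edges hedge).symm.trans (h2 8)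
    rw [hnb8, Finset.sum_insert (by decide), Finset.sum_insert (by decide), Finset.sum_singleton] at hv8
    rw [(Sym2.eq_swap : s((8:Fin 15), 0) = s(0, 8)), (Sym2.eq_swap : s((8:Fin 15), 2) = s(2, 8)), (Sym2.eq_swap : s((8:Fin 15), 5) = s(5, 8))] at hv8
    have hnb9 : F20.neighborFinset 9 = ({0,1,10,11,12} : Finset (Fin 15)) := by decide
    have hv9 := (countP_eq 9 C.edges hedge).symm.trans (h2 9)
    rw [hnb9, Finset.sum_insert (by decide), Finset.sum_insert (by decide), Finset.sum_insert (by decide), Finset.sum_insert (by decide), Finset.sum_singleton] at hv9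
    rw [(Sym2.eq_swap : s((9:Fin 15), 0) = s(0, 9)), (Sym2.eq_swap : s((9:Fin 15), 1) = s(1, 9))] at hv9
    have hnb10 : F20.neighborFinset 10 = ({1,2,9,11,13} : Finset (Fin 15)) := by decide
    have hv10 := (countP_eq 10 C.edges hedge).symm.trans (h2 10)
    rw [hnb10, Finset.sum_insert (by decide), Finset.sum_insert (by decide), Finset.sum_insert (by decide), Finset.sum_insert (by decide), Finset.sum_singleton] at hv10
    rw [(Sym2.eq_swap : s((10:Fin 15), 1) = s(1, 10)), (Sym2.eq_swap : s((10:Fin 15), 2) = s(2, 10)), (Sym2.eq_swap : s((10:Fin 15), 9) = s(9, 10))] at hv10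
    have hnb11 : F20.neighborFinset 11 = ({0,2,9,10,14} : Finset (Fin 15)) := by decide
    have hv11 := (countP_eq 11 C.edges hedge).symm.trans (h2 11)
    rw [hnb11, Finset.sum_insert (by decide), Finset.sum_insert (by decide), Finset.sum_insert (by decide), Finset.sum_insert (by decide), Finset.sum_singleton] at hv11
    rw [(Sym2.eq_swap : s((11:Fin 15), 0) = s(0, 11)), (Sym2.eq_swap : s((11:Fin 15), 2) = s(2, 11)), (Sym2.eq_swap : s((11:Fin 15), 9) = s(9, 11)), (Sym2.eq_swap : s((11:Fin 15), 10) = s(10, 11))] at hv11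
    have hnb12 : F20.neighborFinset 12 = ({0,1,9} : Finset (Fin 15)) := by decide
    have hv12 := (countP_eq 12 C.edges hedge).symm.trans (h2 12)
    rw [hnb12, Finset.sum_insert (by decide), Finset.sum_insert (by decide), Finset.sum_singleton] at hv12
    rw [(Sym2.eq_swap : s((12:Fin 15), 0) = s(0, 12)), (Sym2.eq_swap : s((12:Fin 15), 1) = s(1, 12)), (Sym2.eq_swap : s((12:Fin 15), 9) = s(9, 12))] at hv12
    have hnb13 : F20.neighborFinset 13 = ({1,2,10} : Finset (Fin 15)) := by decide
    have hv13 := (countP_eq 13 C.edges hedge).symm.trans (h2 13)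
    rw [hnb13, Finset.sum_insert (by decide), Finset.sum_insert (by decide), Finset.sum_singleton] at hv13
    rw [(Sym2.eq_swap : s((13:Fin 15), 1) = s(1, 13)), (Sym2.eq_swap : s((13:Fin 15), 2) = s(2, 13)), (Sym2.eq_swap : s((13:Fin 15), 10) = s(10, 13))] at hv13
    have hnb14 : F20.neighborFinset 14 = ({0,2,11} : Finset (Fin 15)) := by decide
    have hv14 := (countP_eq 14 C.edges hedge).symm.trans (h2 14)
    rw [hnb14, Finset.sum_insert (by decide), Finset.sum_insert (by decide), Finset.sum_singleton] at hv14
    rw [(Sym2.eq_swap : s((14:Fin 15), 0) = s(0, 14)), (Sym2.eq_swap : s((14:Fin 15), 2) = s(2, 14)), (Sym2.eq_swap : s((14:Fin 15), 11) = s(11, 14))] at hv14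
    exact keyFalse (hcnt _) (hcnt _) (hcnt _) (hcnt _) (hcnt _) (hcnt _) (hcnt _) (hcnt _) (hcnt _) (hcnt _) (hcnt _) (hcnt _) (hcnt _) (hcnt _) (hcnt _) (hcnt _) (hcnt _) (hcnt _) (hcnt _) (hcnt _) (hcnt _) (hcnt _) (hcnt _) (hcnt _) (hcnt _) (hcnt _) (hcnt _) (hcnt _) (hcnt _) (hcnt _) (hcnt _) (hcnt _) (hcnt _) (hcnt _) (hcnt _) (hcnt _) (hcnt _) (hcnt _) (hcnt _)
      hv0 hv1 hv2 hv3 hv4 hv5 hv6 hv7 hv8 hv9 hv10 hv11 hv12 hv13 hv14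
end
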